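/- arXiv:1906.00668 — 3 statements merged into one kernel-verified Lean document; each statement's English description precedes it below -/
import Mathlib

section
/- Let Σ11 and Σ22 be positive definite real C×C matrices. For any real C×C matrix φ such that the block matrix [[Σ11, φ], [φ^T, Σ22]] is positive semidefinite, we have tr(φ) ≤ tr((Σ22^{1/2} Σ11 Σ22^{1/2})^{1/2}). -/
open Matrix

lemma psd_trace_nonneg' {n : Type*} [Fintype n] [DecidableEq n]
    {A : Matrix n n ℝ} (hA : A.PosSemidef) : 0 ≤ A.trace := by
  rw [Matrix.trace]
  apply Finset.sum_nonneg
  intro i _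
  exact hA.diag_nonneg

lemma trace_fromBlocks' {n m : Type*} [Fintype n] [Fintype m]
    (A : Matrix n n ℝ) (B : Matrix n m ℝ) (C : Matrix m n ℝ) (D : Matrix m m ℝ) :
    (Matrix.fromBlocks A B C D).trace = A.trace + D.trace := by
  simp [Matrix.trace, Fintype.sum_sum_type, Matrix.fromBlocks, Matrix.diag]

/-- **Olkin–Pukelsheim trace bound.** Let `S11`, `S22` be positive definite,
`R22` the positive definite symmetric square root of `S22`, and `N` the positive
semidefinite symmetric square root of `R22 * S11 * R22 = S22^{1/2} S11 S22^{1/2}`.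
For any real matrix `φ` such that the block matrix `[[S11, φ], [φᵀ, S22]]` is positive
semidefinite, `tr(φ) ≤ tr((S22^{1/2} S11 S22^{1/2})^{1/2})`. -/
theorem olkin_pukelsheim_trace_bound {C : ℕ}
    (S11 S22 R22 N φ : Matrix (Fin C) (Fin C) ℝ)
    (hS11 : S11.PosDef) (hS22 : S22.PosDef)
    (hR22 : R22.PosDef) (hR22sq : R22 * R22 = S22)
    (hN : N.PosSemidef) (hNsq : N * N = R22 * S11 * R22)
    (hblk : (Matrix.fromBlocks S11 φ φᵀ S22).PosSemidef) :
    φ.trace ≤ N.trace := by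
  classical
  obtain ⟨K, hKpsd, hK2⟩ : ∃ K : Matrix (Fin C) (Fin C) ℝ, K.PosSemidef ∧ K * K = N := by
    open scoped MatrixOrder in
    exact ⟨CFC.sqrt N, (CFC.sqrt_nonneg N).posSemidef, CFC.sqrt_mul_sqrt_self N hN.nonneg⟩
  -- determinants
  have hRdet : IsUnit R22.det := isUnit_iff_ne_zero.mpr hR22.det_pos.ne'
  have hNdet : IsUnit N.det := by
    have h4 : N.det * N.det ≠ 0 := by
      rw [← Matrix.det_mul, hNsq, Matrix.det_mul, Matrix.det_mul]
      exact (mul_pos (mul_pos hR22.det_pos hS11.det_pos) hR22.det_pos).ne'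
    exact isUnit_iff_ne_zero.mpr (fun h => h4 (by rw [h, zero_mul]))
  have hKdet : IsUnit K.det := by
    have : K.det * K.det ≠ 0 := by rw [← Matrix.det_mul, hK2]; exact hNdet.ne_zero
    exact isUnit_iff_ne_zero.mpr (fun h => this (by rw [h, zero_mul]))
  -- symmetry
  have hRs : R22ᵀ = R22 := by
    have := hR22.1; rwa [Matrix.IsHermitian, conjTranspose_eq_transpose_of_trivial] at this
  have hKs : Kᵀ = K := by
    have := hKpsd.1; rwa [Matrix.IsHermitian, conjTranspose_eq_transpose_of_trivial] at this
  -- inverse lemmas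
  have hRR : R22 * R22⁻¹ = 1 := Matrix.mul_nonsing_inv _ hRdet
  have hRR' : R22⁻¹ * R22 = 1 := Matrix.nonsing_inv_mul _ hRdet
  have hKK : K * K⁻¹ = 1 := Matrix.mul_nonsing_inv _ hKdet
  have hKK' : K⁻¹ * K = 1 := Matrix.nonsing_inv_mul _ hKdet
  have hNN : N * N⁻¹ = 1 := Matrix.mul_nonsing_inv _ hNdet
  have hRis : (R22⁻¹)ᵀ = R22⁻¹ := by rw [Matrix.transpose_nonsing_inv, hRs]
  have hKis : (K⁻¹)ᵀ = K⁻¹ := by rw [Matrix.transpose_nonsing_inv, hKs]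
  set X : Matrix (Fin C) (Fin C) ℝ := R22 * K⁻¹ with hX
  set Y : Matrix (Fin C) (Fin C) ℝ := R22⁻¹ * K with hY
  have hXt : Xᵀ = K⁻¹ * R22 := by rw [hX, Matrix.transpose_mul, hKis, hRs]
  have hYt : Yᵀ = K * R22⁻¹ := by rw [hY, Matrix.transpose_mul, hKs, hRis]
  set B : Matrix (Fin C ⊕ Fin C) (Fin C ⊕ Fin C) ℝ :=
    Matrix.fromBlocks X 0 (-Y) 0 with hB
  have hPpsd : (Bᴴ * (Matrix.fromBlocks S11 φ φᵀ S22) * B).PosSemidef :=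
    hblk.conjTranspose_mul_mul_same B
  have h0 : 0 ≤ (Bᴴ * (Matrix.fromBlocks S11 φ φᵀ S22) * B).trace :=
    psd_trace_nonneg' hPpsd
  have hBt : Bᴴ = Matrix.fromBlocks Xᵀ (-Y)ᵀ 0 0 := by
    rw [hB, conjTranspose_eq_transpose_of_trivial, Matrix.fromBlocks_transpose]
    simp
  -- the four trace values
  have t1 : (Xᵀ * S11 * X).trace = N.trace := by
    have e : Xᵀ * S11 * X = K⁻¹ * (N * N) * K⁻¹ := by
      rw [hXt, hX, hNsq]; noncomm_ring
    rw [e, Matrix.trace_mul_comm, show K⁻¹ * (K⁻¹ * (N * N)) = (K⁻¹ * K⁻¹) * (N * N) by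
      noncomm_ring, show K⁻¹ * K⁻¹ = N⁻¹ by rw [← Matrix.mul_inv_rev, hK2],
      Matrix.trace_mul_comm, Matrix.mul_assoc, hNN, Matrix.mul_one]
  have t4 : Yᵀ * S22 * Y = N := by
    rw [hYt, hY, ← hR22sq, ← hK2]
    calc K * R22⁻¹ * (R22 * R22) * (R22⁻¹ * K)
        = K * (R22⁻¹ * R22) * (R22 * R22⁻¹) * K := by noncomm_ring
      _ = K * K := by rw [hRR, hRR']; noncomm_ring
  have t2 : (Xᵀ * φ * Y).trace = φ.trace := by
    have e : Xᵀ * φ * Y = K⁻¹ * (R22 * φ * R22⁻¹ * K) := by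
      rw [hXt, hY]; noncomm_ring
    rw [e, Matrix.trace_mul_comm, show R22 * φ * R22⁻¹ * K * K⁻¹ = R22 * φ * R22⁻¹ * (K * K⁻¹)
      by noncomm_ring, hKK, Matrix.mul_one, Matrix.trace_mul_comm,
      show R22⁻¹ * (R22 * φ) = (R22⁻¹ * R22) * φ by noncomm_ring, hRR', Matrix.one_mul]
  have t3 : (Yᵀ * φᵀ * X).trace = φ.trace := by
    have e : Yᵀ * φᵀ * X = (Xᵀ * φ * Y)ᵀ := by
      simp [Matrix.transpose_mul, Matrix.mul_assoc]
    rw [e, Matrix.trace_transpose, t2]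
  -- compute the trace of the congruated block matrix
  have key : (Bᴴ * (Matrix.fromBlocks S11 φ φᵀ S22) * B).trace
      = (Xᵀ * S11 * X).trace - (Xᵀ * φ * Y).trace - (Yᵀ * φᵀ * X).trace
        + (Yᵀ * S22 * Y).trace := by
    rw [hBt, hB, Matrix.fromBlocks_multiply, Matrix.fromBlocks_multiply, trace_fromBlocks']
    simp only [Matrix.transpose_neg, Matrix.mul_zero, Matrix.zero_mul, Matrix.mul_neg,
      Matrix.neg_mul, Matrix.add_mul, Matrix.mul_add, Matrix.trace_add, Matrix.trace_neg,
      add_zero, zero_add, Matrix.trace_zero, neg_neg, neg_zero]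
    ring
  rw [key, t1, t2, t3, t4] at h0
  linarith
end

section
/- Let Σ11 and Σ22 be positive definite real C×C matrices and let φ* = Σ11 Σ22^{1/2} (Σ22^{1/2} Σ11 Σ22^{1/2})^{-1/2} Σ22^{1/2}. Then the block matrix [[Σ11, φ*], [φ*^T, Σ22]] is positive semidefinite and tr(φ*) = tr((Σ22^{1/2} Σ11 Σ22^{1/2})^{1/2}). -/
open Matrix

/-- **the Olkin–Pukelsheim maximizer achieves the bound.** Let `S11`, `S22`
be positive definite, `R22` the positive definite symmetric square root of `S22`, and `N`
the positive definite symmetric square root of `R22 * S11 * R22`. With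
`φ* = S11 S22^{1/2} (S22^{1/2} S11 S22^{1/2})^{-1/2} S22^{1/2} = S11 * R22 * N⁻¹ * R22`,
the block matrix `[[S11, φ*], [φ*ᵀ, S22]]` is positive semidefinite and
`tr(φ*) = tr((S22^{1/2} S11 S22^{1/2})^{1/2})`. -/
theorem olkin_pukelsheim_maximizer {C : ℕ}
    (S11 S22 R22 N : Matrix (Fin C) (Fin C) ℝ)
    (hS11 : S11.PosDef) (hS22 : S22.PosDef)
    (hR22 : R22.PosDef) (hR22sq : R22 * R22 = S22)
    (hN : N.PosDef) (hNsq : N * N = R22 * S11 * R22) :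
    (Matrix.fromBlocks S11 (S11 * R22 * N⁻¹ * R22) (S11 * R22 * N⁻¹ * R22)ᵀ S22).PosSemidef ∧
      (S11 * R22 * N⁻¹ * R22).trace = N.trace := by
  have hNdet : IsUnit N.det := isUnit_iff_ne_zero.mpr hN.det_pos.ne'
  have hNinv : N * N⁻¹ = 1 := Matrix.mul_nonsing_inv _ hNdet
  have hNinv' : N⁻¹ * N = 1 := Matrix.nonsing_inv_mul _ hNdet
  have hNsym : Nᵀ = N := by
    have := hN.isHermitian.eq
    rwa [N.conjTranspose_eq_transpose_of_trivial] at this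
  have hR22sym : R22ᵀ = R22 := by
    have := hR22.isHermitian.eq
    rwa [R22.conjTranspose_eq_transpose_of_trivial] at this
  have hNinvSym : (N⁻¹)ᵀ = N⁻¹ := by
    rw [Matrix.transpose_nonsing_inv, hNsym]
  have hS11sym : S11ᵀ = S11 := by
    have := hS11.isHermitian.eq
    rwa [S11.conjTranspose_eq_transpose_of_trivial] at this
  have hKsym : (R22 * N⁻¹ * R22)ᵀ = R22 * N⁻¹ * R22 := by
    simp only [Matrix.transpose_mul, hR22sym, hNinvSym]
    noncomm_ring
  obtain ⟨Q, hQsa, -, hQsq⟩ : ∃ x : Matrix (Fin C) (Fin C) ℝ, IsSelfAdjoint x ∧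
      QuasispectrumRestricts x ContinuousMap.realToNNReal ∧ x * x = S11 := by
    open scoped MatrixOrder in
    exact CFC.exists_sqrt_of_isSelfAdjoint_of_quasispectrumRestricts hS11.isHermitian
      (QuasispectrumRestricts.nnreal_of_nonneg hS11.posSemidef.nonneg)
  have hQsym : Qᵀ = Q := by
    have := hQsa.star_eq
    rwa [Matrix.star_eq_conjTranspose, Matrix.conjTranspose_eq_transpose_of_trivial] at this
  have hKSK : (R22 * N⁻¹ * R22) * S11 * (R22 * N⁻¹ * R22) = S22 := by
    calc (R22 * N⁻¹ * R22) * S11 * (R22 * N⁻¹ * R22)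
        = R22 * N⁻¹ * (R22 * S11 * R22) * N⁻¹ * R22 := by noncomm_ring
      _ = R22 * N⁻¹ * (N * N) * N⁻¹ * R22 := by rw [hNsq]
      _ = R22 * (N⁻¹ * N) * (N * N⁻¹) * R22 := by noncomm_ring
      _ = S22 := by rw [hNinv, hNinv', mul_one, mul_one, hR22sq]
  have hphi : S11 * R22 * N⁻¹ * R22 = S11 * (R22 * N⁻¹ * R22) := by noncomm_ring
  constructor
  · have hfac :
        Matrix.fromBlocks S11 (S11 * R22 * N⁻¹ * R22) (S11 * R22 * N⁻¹ * R22)ᵀ S22 =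
          (Matrix.fromBlocks Q (Q * (R22 * N⁻¹ * R22)) 0 0)ᴴ *
            Matrix.fromBlocks Q (Q * (R22 * N⁻¹ * R22)) 0 0 := by
      rw [Matrix.conjTranspose_eq_transpose_of_trivial, Matrix.fromBlocks_transpose,
        Matrix.fromBlocks_multiply]
      have e11 : Qᵀ * Q + (0 : Matrix (Fin C) (Fin C) ℝ)ᵀ * 0 = S11 := by
        rw [Matrix.transpose_zero, mul_zero, add_zero, hQsym, hQsq]
      have e12 : Qᵀ * (Q * (R22 * N⁻¹ * R22)) + (0 : Matrix (Fin C) (Fin C) ℝ)ᵀ * 0 =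
          S11 * R22 * N⁻¹ * R22 := by
        rw [Matrix.transpose_zero, mul_zero, add_zero, hQsym, ← mul_assoc, hQsq, hphi]
      have e21 : (Q * (R22 * N⁻¹ * R22))ᵀ * Q + (0 : Matrix (Fin C) (Fin C) ℝ)ᵀ * 0 =
          (S11 * R22 * N⁻¹ * R22)ᵀ := by
        rw [Matrix.transpose_zero, mul_zero, add_zero, hphi,
          Matrix.transpose_mul Q (R22 * N⁻¹ * R22), hKsym, hQsym, mul_assoc, hQsq,
          Matrix.transpose_mul S11 (R22 * N⁻¹ * R22), hKsym, hS11sym]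
      have e22 : (Q * (R22 * N⁻¹ * R22))ᵀ * (Q * (R22 * N⁻¹ * R22)) +
          (0 : Matrix (Fin C) (Fin C) ℝ)ᵀ * 0 = S22 := by
        rw [Matrix.transpose_zero, mul_zero, add_zero, Matrix.transpose_mul, hKsym, hQsym]
        calc (R22 * N⁻¹ * R22) * Q * (Q * (R22 * N⁻¹ * R22))
            = (R22 * N⁻¹ * R22) * (Q * Q) * (R22 * N⁻¹ * R22) := by noncomm_ring
          _ = S22 := by rw [hQsq, hKSK]
      rw [e11, e12, e21, e22]
    rw [hfac]
    exact Matrix.posSemidef_conjTranspose_mul_self _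
  · calc (S11 * R22 * N⁻¹ * R22).trace
        = (R22 * (S11 * R22 * N⁻¹)).trace := Matrix.trace_mul_comm _ _
      _ = ((R22 * S11 * R22) * N⁻¹).trace := by rw [← mul_assoc, ← mul_assoc]
      _ = ((N * N) * N⁻¹).trace := by rw [hNsq]
      _ = N.trace := by rw [mul_assoc, hNinv, mul_one]
end

section
/- Let Σc and Σs be positive definite real C×C matrices and T = Σc^{-1/2}(Σc^{1/2} Σs Σc^{1/2})^{1/2} Σc^{-1/2}. Then tr(Σs (T^{-1})^T) = tr((Σc^{1/2} Σs Σc^{1/2})^{1/2}). -/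
open Matrix

/-- With `Rc` the positive definite symmetric square root of `Sc` and
`M` that of `Rc * Ss * Rc`, the OST map `T = Rc⁻¹ * M * Rc⁻¹` satisfies
`tr(Ss (T⁻¹)ᵀ) = tr((Sc^{1/2} Ss Sc^{1/2})^{1/2}) = tr M`. -/
theorem ost_trace_cross_covariance {C : ℕ}
    (Sc Ss Rc M : Matrix (Fin C) (Fin C) ℝ)
    (hSc : Sc.PosDef) (hSs : Ss.PosDef)
    (hRc : Rc.PosDef) (hRcsq : Rc * Rc = Sc)
    (hM : M.PosDef) (hMsq : M * M = Rc * Ss * Rc) :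
    (Ss * ((Rc⁻¹ * M * Rc⁻¹)⁻¹)ᵀ).trace = M.trace := by
  have hRu : IsUnit Rc.det := isUnit_iff_ne_zero.2 (ne_of_gt hRc.det_pos)
  have hMu : IsUnit M.det := isUnit_iff_ne_zero.2 (ne_of_gt hM.det_pos)
  have hinv : (Rc⁻¹ * M * Rc⁻¹)⁻¹ = Rc * M⁻¹ * Rc := by
    rw [Matrix.mul_inv_rev, Matrix.mul_inv_rev, Matrix.nonsing_inv_nonsing_inv _ hRu,
      mul_assoc]
  have hRs : Rcᵀ = Rc := hRc.1.eq
  have hMs : Mᵀ = M := hM.1.eq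
  have hMis : (M⁻¹)ᵀ = M⁻¹ := by rw [Matrix.transpose_nonsing_inv, hMs]
  rw [hinv, Matrix.transpose_mul, Matrix.transpose_mul, hRs, hMis]
  calc (Ss * (Rc * (M⁻¹ * Rc))).trace
      = (Ss * Rc * (M⁻¹ * Rc)).trace := by rw [mul_assoc]
    _ = (M⁻¹ * Rc * Ss * Rc).trace := by rw [Matrix.trace_mul_cycle, mul_assoc]
    _ = (M⁻¹ * (Rc * Ss * Rc)).trace := by rw [mul_assoc, mul_assoc, mul_assoc]
    _ = (M⁻¹ * (M * M)).trace := by rw [hMsq]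
    _ = M.trace := by rw [← mul_assoc, Matrix.nonsing_inv_mul _ hMu, one_mul]
end
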